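/- Let K ≥ 1, N ≥ 1 and let h_{k,i} ∈ ℝ^p for k = 1,…,K and i = 1,…,N be feature vectors, and let U ∈ ℝ^{p×p} be an invertible matrix. Let H′ = (U h_{k,i}) denote the transformed features. Then Tr[Σ_T(H′)† Σ_B(H′)] = Tr[Σ_T(H)† Σ_B(H)] and rank(Σ_B(H′)) = rank(Σ_B(H)); consequently, if rank(Σ_B(H)) > 0, the Variability Collapse Index VCI = 1 − Tr[Σ_T† Σ_B]/rank(Σ_B) is the same for H and H′. -/
import Mathlib


open Matrix Finset

noncomputable section

/-- The `k`-th class mean `μ_k = (1/N) ∑_i h_{k,i}`. -/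
def classMean {K N p : ℕ} (H : Fin K → Fin N → (Fin p → ℝ)) (k : Fin K) : Fin p → ℝ :=
  (N : ℝ)⁻¹ • ∑ i, H k i

/-- The global mean `μ_G = (1/(KN)) ∑_{k,i} h_{k,i}`. -/
def globalMean {K N p : ℕ} (H : Fin K → Fin N → (Fin p → ℝ)) : Fin p → ℝ :=
  ((K : ℝ) * (N : ℝ))⁻¹ • ∑ k, ∑ i, H k i

/-- Within-class covariance `Σ_W = (1/(KN)) ∑_{k,i} (h_{k,i} − μ_k)(h_{k,i} − μ_k)ᵀ`. -/
def SigmaW {K N p : ℕ} (H : Fin K → Fin N → (Fin p → ℝ)) : Matrix (Fin p) (Fin p) ℝ :=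
  ((K : ℝ) * (N : ℝ))⁻¹ •
    ∑ k, ∑ i, vecMulVec (H k i - classMean H k) (H k i - classMean H k)

/-- Between-class covariance `Σ_B = (1/K) ∑_k (μ_k − μ_G)(μ_k − μ_G)ᵀ`. -/
def SigmaB {K N p : ℕ} (H : Fin K → Fin N → (Fin p → ℝ)) : Matrix (Fin p) (Fin p) ℝ :=
  (K : ℝ)⁻¹ • ∑ k, vecMulVec (classMean H k - globalMean H) (classMean H k - globalMean H)

/-- Overall covariance `Σ_T = (1/(KN)) ∑_{k,i} (h_{k,i} − μ_G)(h_{k,i} − μ_G)ᵀ`. -/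
def SigmaT {K N p : ℕ} (H : Fin K → Fin N → (Fin p → ℝ)) : Matrix (Fin p) (Fin p) ℝ :=
  ((K : ℝ) * (N : ℝ))⁻¹ •
    ∑ k, ∑ i, vecMulVec (H k i - globalMean H) (H k i - globalMean H)
/-- `Ad` is the Moore–Penrose pseudoinverse of `A`: the four Penrose conditions. -/
def IsMoorePenrose {p : ℕ} (A Ad : Matrix (Fin p) (Fin p) ℝ) : Prop :=
  A * Ad * A = A ∧ Ad * A * Ad = Ad ∧ (A * Ad)ᵀ = A * Ad ∧ (Ad * A)ᵀ = Ad * A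

/- ### Auxiliary lemmas -/

lemma vmv_mulVec {p : ℕ} (v w x : Fin p → ℝ) :
    (vecMulVec v w).mulVec x = (w ⬝ᵥ x) • v := by
  funext i
  simp [vecMulVec_apply, mulVec, dotProduct, Finset.sum_mul, Finset.mul_sum, mul_comm,
    mul_assoc, mul_left_comm]

lemma vmv_U {p : ℕ} (U : Matrix (Fin p) (Fin p) ℝ) (v w : Fin p → ℝ) :
    vecMulVec (U.mulVec v) (U.mulVec w) = U * vecMulVec v w * Uᵀ := by
  ext i j
  simp only [vecMulVec_apply, mul_apply, mulVec, dotProduct, transpose_apply, Finset.sum_mul,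
    Finset.mul_sum]
  exact Finset.sum_congr rfl fun a _ => Finset.sum_congr rfl fun b _ => by ring

lemma vmv_trans {p : ℕ} (v w : Fin p → ℝ) : (vecMulVec v w)ᵀ = vecMulVec w v := by
  ext i j; simp [vecMulVec_apply, mul_comm]

lemma my_sum_mulVec {ι p : ℕ} (M : Fin ι → Matrix (Fin p) (Fin p) ℝ) (x : Fin p → ℝ) :
    (∑ i, M i).mulVec x = ∑ i, (M i).mulVec x := by
  funext j
  simp only [mulVec, dotProduct, Matrix.sum_apply, Finset.sum_apply, Finset.sum_mul]
  exact Finset.sum_comm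

lemma my_sum_dotProduct {ι p : ℕ} (v : Fin ι → (Fin p → ℝ)) (x : Fin p → ℝ) :
    (∑ i, v i) ⬝ᵥ x = ∑ i, (v i ⬝ᵥ x) := by
  simp only [dotProduct, Finset.sum_apply, Finset.sum_mul]
  exact Finset.sum_comm

section Trans
variable {K N p : ℕ} (H : Fin K → Fin N → (Fin p → ℝ)) (U : Matrix (Fin p) (Fin p) ℝ)
variable (H' : Fin K → Fin N → (Fin p → ℝ)) (hH' : ∀ k i, H' k i = U.mulVec (H k i))

include hH'

lemma classMean_trans (k : Fin K) : classMean H' k = U.mulVec (classMean H k) := by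
  simp only [classMean, hH', ← Matrix.mulVecLin_apply, _root_.map_smul, map_sum]

lemma globalMean_trans : globalMean H' = U.mulVec (globalMean H) := by
  simp only [globalMean, hH', ← Matrix.mulVecLin_apply, _root_.map_smul, map_sum]

lemma SigmaB_trans : SigmaB H' = U * SigmaB H * Uᵀ := by
  simp only [SigmaB, classMean_trans H U H' hH', globalMean_trans H U H' hH',
    ← Matrix.mulVec_sub, vmv_U, Matrix.smul_mul, Matrix.mul_smul, Finset.mul_sum, Finset.sum_mul]

lemma SigmaT_trans : SigmaT H' = U * SigmaT H * Uᵀ := by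
  simp only [SigmaT, hH', globalMean_trans H U H' hH',
    ← Matrix.mulVec_sub, vmv_U, Matrix.smul_mul, Matrix.mul_smul, Finset.mul_sum, Finset.sum_mul]

end Trans

lemma SigmaB_symm {K N p : ℕ} (H : Fin K → Fin N → (Fin p → ℝ)) : (SigmaB H)ᵀ = SigmaB H := by
  simp [SigmaB, transpose_smul, transpose_sum, vmv_trans]

lemma SigmaT_symm {K N p : ℕ} (H : Fin K → Fin N → (Fin p → ℝ)) : (SigmaT H)ᵀ = SigmaT H := by
  simp [SigmaT, transpose_smul, transpose_sum, vmv_trans]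


lemma my_dotProduct_sum {ι p : ℕ} (x : Fin p → ℝ) (v : Fin ι → (Fin p → ℝ)) :
    x ⬝ᵥ (∑ i, v i) = ∑ i, (x ⬝ᵥ v i) := by
  simp only [dotProduct, Finset.sum_apply, Finset.mul_sum]
  exact Finset.sum_comm

lemma SigmaT_ker {K N p : ℕ} (hK : 1 ≤ K) (hN : 1 ≤ N) (H : Fin K → Fin N → (Fin p → ℝ))
    (x : Fin p → ℝ) (hx : (SigmaT H).mulVec x = 0) : (SigmaB H).mulVec x = 0 := by
  have hKpos : (0:ℝ) < K := by exact_mod_cast hK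
  have hNpos : (0:ℝ) < N := by exact_mod_cast hN
  have hexp : (SigmaT H).mulVec x
      = ((K : ℝ) * (N : ℝ))⁻¹ •
        ∑ k, ∑ i, ((H k i - globalMean H) ⬝ᵥ x) • (H k i - globalMean H) := by
    simp only [SigmaT, Matrix.smul_mulVec, my_sum_mulVec, vmv_mulVec]
  have h0 : x ⬝ᵥ (SigmaT H).mulVec x = 0 := by rw [hx]; simp
  rw [hexp] at h0
  simp only [dotProduct_smul, my_dotProduct_sum, smul_eq_mul] at h0
  have h0' : ∑ k, ∑ i, ((H k i - globalMean H) ⬝ᵥ x) ^ 2 = 0 := by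
    have hc : ((K : ℝ) * (N : ℝ))⁻¹ ≠ 0 := by positivity
    have := mul_eq_zero.mp h0
    rcases this with h | h
    · exact absurd h hc
    · rw [← h]
      exact Finset.sum_congr rfl fun k _ => Finset.sum_congr rfl fun i _ => by
        rw [dotProduct_comm]; ring
  have hterm : ∀ k i, (H k i - globalMean H) ⬝ᵥ x = 0 := by
    intro k i
    have h1 := (Finset.sum_eq_zero_iff_of_nonneg (fun k _ => Finset.sum_nonneg
      (fun i _ => sq_nonneg _))).mp h0' k (Finset.mem_univ k)
    have h2 := (Finset.sum_eq_zero_iff_of_nonneg (fun i _ => sq_nonneg _)).mp h1 i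
      (Finset.mem_univ i)
    exact pow_eq_zero_iff (two_ne_zero) |>.mp h2
  have hterm' : ∀ k i, H k i ⬝ᵥ x = globalMean H ⬝ᵥ x := by
    intro k i
    have := hterm k i
    rwa [sub_dotProduct, sub_eq_zero] at this
  have hclass : ∀ k, (classMean H k - globalMean H) ⬝ᵥ x = 0 := by
    intro k
    rw [sub_dotProduct, sub_eq_zero]
    simp only [classMean, smul_dotProduct, my_sum_dotProduct, hterm', Finset.sum_const,
      Finset.card_univ, Fintype.card_fin, nsmul_eq_mul, smul_eq_mul]
    rw [← mul_assoc, inv_mul_cancel₀ (ne_of_gt hNpos), one_mul]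
  simp only [SigmaB, Matrix.smul_mulVec, my_sum_mulVec, vmv_mulVec, hclass, zero_smul,
    Finset.sum_const_zero, smul_zero]

lemma colKill {p : ℕ} {A B : Matrix (Fin p) (Fin p) ℝ}
    (h : ∀ x, A.mulVec x = 0 → B.mulVec x = 0)
    (C : Matrix (Fin p) (Fin p) ℝ) (hC : A * C = 0) : B * C = 0 := by
  ext i j
  have hc : A.mulVec (fun k => C k j) = 0 := by
    funext i'
    have := congrFun (congrFun hC i') j
    simpa [mul_apply, mulVec, dotProduct] using this
  have := congrFun (h _ hc) i
  simpa [mul_apply, mulVec, dotProduct] using this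

lemma factorB {p : ℕ} {A Ad B : Matrix (Fin p) (Fin p) ℝ}
    (hP : IsMoorePenrose A Ad) (hA : Aᵀ = A) (hB : Bᵀ = B)
    (hker : ∀ x, A.mulVec x = 0 → B.mulVec x = 0) :
    B = A * (Ad * B * Ad) * A := by
  obtain ⟨h1, h2, h3, h4⟩ := hP
  have hq0 : A * (1 - Ad * A) = 0 := by
    rw [mul_sub, mul_one, ← mul_assoc, h1, sub_self]
  have hBq : B * (Ad * A) = B := by
    have h := colKill hker _ hq0
    rw [mul_sub, mul_one, sub_eq_zero] at h
    exact h.symm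
  have h5 : (1 - A * Ad) * A = 0 := by
    rw [sub_mul, one_mul, mul_assoc, ← mul_assoc, h1, sub_self]
  have h6 : (1 - A * Ad)ᵀ = 1 - A * Ad := by rw [transpose_sub, transpose_one, h3]
  have hp0 : A * (1 - A * Ad) = 0 := by
    calc A * (1 - A * Ad) = ((1 - A * Ad)ᵀ * Aᵀ)ᵀ := by
          rw [← transpose_mul, transpose_transpose]
      _ = ((1 - A * Ad) * A)ᵀ := by rw [h6, hA]
      _ = 0 := by rw [h5, transpose_zero]
  have hBp : B * (A * Ad) = B := by
    have h := colKill hker _ hp0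
    rw [mul_sub, mul_one, sub_eq_zero] at h
    exact h.symm
  have hABB : (A * Ad) * B = B := by
    have h := congrArg Matrix.transpose hBp
    rwa [transpose_mul, h3, hB] at h
  calc B = (A * Ad) * B := hABB.symm
    _ = (A * Ad) * (B * (Ad * A)) := by rw [hBq]
    _ = A * (Ad * B * Ad) * A := by noncomm_ring

lemma trace_key {p : ℕ} (A Ad M : Matrix (Fin p) (Fin p) ℝ) (h1 : A * Ad * A = A) :
    (Ad * (A * M * A)).trace = (A * M).trace := by
  rw [show Ad * (A * M * A) = (Ad * A * M) * A by noncomm_ring, Matrix.trace_mul_comm,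
    show A * (Ad * A * M) = (A * Ad * A) * M by noncomm_ring, h1]

/-- **Corollary (invariance of VCI).** For an invertible `U ∈ ℝ^{p×p}` and transformed
features `h'_{k,i} = U h_{k,i}`, one has `Tr[Σ_T(H')† Σ_B(H')] = Tr[Σ_T(H)† Σ_B(H)]` and
`rank Σ_B(H') = rank Σ_B(H)`; hence, if `rank Σ_B(H) > 0`, the Variability Collapse Index
`VCI = 1 − Tr[Σ_T† Σ_B]/rank(Σ_B)` agrees on `H` and `H'`. -/
theorem vci_invariant {K N p : ℕ} (hK : 1 ≤ K) (hN : 1 ≤ N)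
    (H : Fin K → Fin N → (Fin p → ℝ))
    (U : Matrix (Fin p) (Fin p) ℝ) (hU : IsUnit U.det)
    (H' : Fin K → Fin N → (Fin p → ℝ)) (hH' : ∀ k i, H' k i = U.mulVec (H k i))
    (STd STd' : Matrix (Fin p) (Fin p) ℝ)
    (hSTd : IsMoorePenrose (SigmaT H) STd) (hSTd' : IsMoorePenrose (SigmaT H') STd') :
    (STd' * SigmaB H').trace = (STd * SigmaB H).trace ∧
    (SigmaB H').rank = (SigmaB H).rank ∧
    (0 < (SigmaB H).rank →
      1 - (STd' * SigmaB H').trace / ((SigmaB H').rank : ℝ)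
        = 1 - (STd * SigmaB H).trace / ((SigmaB H).rank : ℝ)) := by
  have hUt : IsUnit Uᵀ.det := by rwa [Matrix.det_transpose]
  have hBt := SigmaB_trans H U H' hH'
  have hTt := SigmaT_trans H U H' hH'
  set A := SigmaT H with hAdef
  set B := SigmaB H with hBdef
  set M : Matrix (Fin p) (Fin p) ℝ := STd * B * STd with hM
  have hfac : B = A * M * A :=
    factorB hSTd (SigmaT_symm H) (SigmaB_symm H) (SigmaT_ker hK hN H)
  have htr1 : (STd * B).trace = (A * M).trace := by
    conv_lhs => rw [hfac]
    exact trace_key A STd M hSTd.1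
  have e2 : U⁻¹ * U = 1 := Matrix.nonsing_inv_mul U hU
  have e1 : Uᵀ * (U⁻¹)ᵀ = 1 := by rw [← transpose_mul, e2, transpose_one]
  set M' : Matrix (Fin p) (Fin p) ℝ := (U⁻¹)ᵀ * M * U⁻¹ with hM'
  have hfac' : SigmaB H' = SigmaT H' * M' * SigmaT H' := by
    rw [hBt, hTt, hfac, hM']
    calc U * (A * M * A) * Uᵀ
        = U * A * (Uᵀ * (U⁻¹)ᵀ) * M * (U⁻¹ * U) * A * Uᵀ := by rw [e1, e2]; noncomm_ring
      _ = U * A * Uᵀ * ((U⁻¹)ᵀ * M * U⁻¹) * (U * A * Uᵀ) := by noncomm_ring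
  have htr2 : (STd' * SigmaB H').trace = (SigmaT H' * M').trace := by
    conv_lhs => rw [hfac']
    exact trace_key _ STd' M' hSTd'.1
  have htr3 : (SigmaT H' * M').trace = (A * M).trace := by
    rw [hTt, hM']
    rw [show U * A * Uᵀ * ((U⁻¹)ᵀ * M * U⁻¹) = U * (A * (Uᵀ * (U⁻¹)ᵀ) * M) * U⁻¹ by
      noncomm_ring, e1]
    rw [Matrix.trace_mul_comm, show U⁻¹ * (U * (A * 1 * M)) = (U⁻¹ * U) * (A * 1 * M) by
      noncomm_ring, e2]
    simp [Matrix.one_mul, Matrix.mul_one]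
  have htrace : (STd' * SigmaB H').trace = (STd * B).trace := by rw [htr2, htr3, htr1]
  have hrank : (SigmaB H').rank = B.rank := by
    rw [hBt, Matrix.rank_mul_eq_left_of_isUnit_det Uᵀ (U * B) hUt,
      Matrix.rank_mul_eq_right_of_isUnit_det U B hU]
  refine ⟨htrace, hrank, fun _ => ?_⟩
  rw [htrace, hrank]
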